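/- Constrained minimal tilings: let D be a domain, S a set of interior vertices of D, and h : S → ℤ a prescription of heights. If there exists at least one tiling T of D with h_T(v) = h(v) for all v ∈ S, then among all such tilings there is a smallest one T_S (smallest for the order ≤), and the height function of T_S has no local maximum at any interior vertex outside S. -/

import Mathlib

namespace DominoTiling

/-!
Domino tilings of simply connected domains in the square lattice,
following Desreux–Rémila, "An optimal algorithm to generate tilings".
-/

abbrev Cell : Type := ℤ × ℤ
abbrev Vertex : Type := ℤ × ℤ

/-- The closed unit square of the cell with lower-left corner `c`. -/
def cellSquare (c : Cell) : Set (ℝ × ℝ) :=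
  Set.Icc ((c.1 : ℝ), (c.2 : ℝ)) ((c.1 : ℝ) + 1, (c.2 : ℝ) + 1)

/-- The closed union of the cells of `D`. -/
def regionOf (D : Set Cell) : Set (ℝ × ℝ) :=
  ⋃ c ∈ D, cellSquare c

/-- A domain: a finite nonempty set of cells whose union is a simply connected
subset of the plane. -/
structure IsDomain (D : Set Cell) : Prop where
  finite : D.Finite
  nonempty : D.Nonempty
  simplyConnected : SimplyConnectedSpace (regionOf D)

def embedV (v : Vertex) : ℝ × ℝ := ((v.1 : ℝ), (v.2 : ℝ))

/-- The four corners of a cell. -/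
def cornersOf (c : Cell) : Set Vertex :=
  {c, (c.1 + 1, c.2), (c.1, c.2 + 1), (c.1 + 1, c.2 + 1)}

/-- A vertex of `D`: a point of `ℤ²` lying in the closed union of `D`. -/
def IsVertexOf (D : Set Cell) (v : Vertex) : Prop :=
  embedV v ∈ regionOf D

/-- A boundary vertex of `D`: a vertex on the topological boundary of the union. -/
def IsBoundaryVertexOf (D : Set Cell) (v : Vertex) : Prop :=
  IsVertexOf D v ∧ embedV v ∈ frontier (regionOf D)

/-- An interior vertex of `D`: a vertex not on the topological boundary. -/
def IsInteriorVertexOf (D : Set Cell) (v : Vertex) : Prop :=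
  IsVertexOf D v ∧ embedV v ∉ frontier (regionOf D)

/-- Directed lattice edges, directed clockwise around black cells (cells whose
coordinate sum is even), equivalently counterclockwise around white cells:
vertical edges leave vertices of even coordinate sum, horizontal edges leave
vertices of odd coordinate sum. -/
def IsDirEdge (v w : Vertex) : Prop :=
  (Even (v.1 + v.2) ∧ (w = (v.1, v.2 + 1) ∨ w = (v.1, v.2 - 1))) ∨
  (¬ Even (v.1 + v.2) ∧ (w = (v.1 + 1, v.2) ∨ w = (v.1 - 1, v.2)))

/-- A directed lattice edge lying in the closed union of `D` (equivalently, its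
two endpoints are corners of a common cell of `D`). -/
def EdgeInDomain (D : Set Cell) (v w : Vertex) : Prop :=
  IsDirEdge v w ∧ ∃ c ∈ D, v ∈ cornersOf c ∧ w ∈ cornersOf c

/-- A domino: a union of two cells sharing an edge. -/
def IsDomino (d : Set Cell) : Prop :=
  ∃ a b : ℤ, d = {(a, b), (a + 1, b)} ∨ d = {(a, b), (a, b + 1)}

/-- The central axis of a domino, as an unordered pair `{v, w}` of vertices:
the common side of its two cells. -/
def IsCentralAxis (d : Set Cell) (v w : Vertex) : Prop :=
  ∃ a b : ℤ,
    (d = {(a, b), (a + 1, b)} ∧ ({v, w} : Set Vertex) = {(a + 1, b), (a + 1, b + 1)}) ∨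
    (d = {(a, b), (a, b + 1)} ∧ ({v, w} : Set Vertex) = {(a, b + 1), (a + 1, b + 1)})

/-- A tiling of `D`: a set of dominoes that partitions `D`. -/
def IsTiling (D : Set Cell) (T : Set (Set Cell)) : Prop :=
  (∀ d ∈ T, IsDomino d) ∧ T.PairwiseDisjoint id ∧ ⋃₀ T = D

/-- `h` is a height function for the tiling `T` of `D` with origin `O`:
`h O = 0`, and along every directed edge `(v, w)` lying in the closed union of
`D`, `h w = h v - 3` if the edge is the central axis of a domino of `T`, and
`h w = h v + 1` otherwise. -/
def IsHeightFunction (D : Set Cell) (O : Vertex) (T : Set (Set Cell))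
    (h : Vertex → ℤ) : Prop :=
  h O = 0 ∧
  ∀ v w : Vertex, EdgeInDomain D v w →
    ((∃ d ∈ T, IsCentralAxis d v w) → h w = h v - 3) ∧
    (¬ (∃ d ∈ T, IsCentralAxis d v w) → h w = h v + 1)

/-- The order on tilings: `T ≤ T'` iff `h_T ≤ h_{T'}` pointwise on the
vertices of `D`. -/
def TilingLE (D : Set Cell) (O : Vertex) (T T' : Set (Set Cell)) : Prop :=
  ∀ h h' : Vertex → ℤ, IsHeightFunction D O T h → IsHeightFunction D O T' h' →
    ∀ v : Vertex, IsVertexOf D v → h v ≤ h' v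

/-- The two horizontal dominoes filling the 2×2 square of cells centered at
the vertex `v`. -/
def hDominoes (v : Vertex) : Set (Set Cell) :=
  { {(v.1 - 1, v.2 - 1), (v.1, v.2 - 1)}, {(v.1 - 1, v.2), (v.1, v.2)} }

/-- The two vertical dominoes filling the 2×2 square of cells centered at
the vertex `v`. -/
def vDominoes (v : Vertex) : Set (Set Cell) :=
  { {(v.1 - 1, v.2 - 1), (v.1 - 1, v.2)}, {(v.1, v.2 - 1), (v.1, v.2)} }

/-- Upward flip at the interior vertex `v`: the two dominoes of `T` whose
central axes are the directed edges ending at `v` are replaced by the two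
other dominoes covering the same 2×2 square, whose central axes are the
directed edges starting at `v`. -/
def UpwardFlip (D : Set Cell) (v : Vertex) (T T' : Set (Set Cell)) : Prop :=
  IsInteriorVertexOf D v ∧
  ((Even (v.1 + v.2) ∧ vDominoes v ⊆ T ∧ T' = (T \ vDominoes v) ∪ hDominoes v) ∨
   (¬ Even (v.1 + v.2) ∧ hDominoes v ⊆ T ∧ T' = (T \ hDominoes v) ∪ vDominoes v))

/-- A flip is an upward flip or a downward flip (the reverse operation). -/
def Flip (D : Set Cell) (v : Vertex) (T T' : Set (Set Cell)) : Prop :=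
  UpwardFlip D v T T' ∨ UpwardFlip D v T' T

/-- `w` is one of the four lattice neighbours of `v`. -/
def Adjacent (v w : Vertex) : Prop :=
  w = (v.1 + 1, v.2) ∨ w = (v.1 - 1, v.2) ∨ w = (v.1, v.2 + 1) ∨ w = (v.1, v.2 - 1)

/-- `v` is a local maximum of `h`: an interior vertex whose height exceeds the
heights of its four neighbours. -/
def IsLocalMax (D : Set Cell) (h : Vertex → ℤ) (v : Vertex) : Prop :=
  IsInteriorVertexOf D v ∧ ∀ w : Vertex, Adjacent v w → h w < h v

/-- `v` is a local minimum of `h`: an interior vertex whose height is below the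
heights of its four neighbours. -/
def IsLocalMin (D : Set Cell) (h : Vertex → ℤ) (v : Vertex) : Prop :=
  IsInteriorVertexOf D v ∧ ∀ w : Vertex, Adjacent v w → h v < h w


/-! ### Basic lemmas -/

lemma mem_cornersOf {v : Vertex} {c : Cell} :
    v ∈ cornersOf c ↔ v = c ∨ v = (c.1 + 1, c.2) ∨ v = (c.1, c.2 + 1) ∨ v = (c.1 + 1, c.2 + 1) := by
  simp [cornersOf]

lemma not_isDirEdge_symm {v w : Vertex} (h : IsDirEdge v w) : ¬ IsDirEdge w v := by
  obtain ⟨a, b⟩ := v; obtain ⟨c, d⟩ := w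
  simp only [IsDirEdge, Prod.ext_iff, Int.even_iff] at *
  omega

/-- A symmetric (undirected) version of `EdgeInDomain`. -/
def EdgeSym (D : Set Cell) (v w : Vertex) : Prop :=
  EdgeInDomain D v w ∨ EdgeInDomain D w v

/-- Undirected drop of 3 along a lattice edge of the domain. -/
def Drop (D : Set Cell) (h : Vertex → ℤ) (v w : Vertex) : Prop :=
  (EdgeInDomain D v w ∧ h w = h v - 3) ∨ (EdgeInDomain D w v ∧ h v = h w - 3)

lemma drop_comm {D h v w} : Drop D h v w ↔ Drop D h w v := or_comm

lemma drop_iff {D : Set Cell} {h : Vertex → ℤ} {v w : Vertex}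
    (he : EdgeInDomain D v w) : Drop D h v w ↔ h w = h v - 3 := by
  constructor
  · rintro (⟨_, e⟩ | ⟨⟨hd', _⟩, _⟩)
    · exact e
    · exact absurd hd' (not_isDirEdge_symm he.1)
  · intro e; exact Or.inl ⟨he, e⟩

lemma drop_iff_rev {D : Set Cell} {h : Vertex → ℤ} {v w : Vertex}
    (he : EdgeInDomain D w v) : Drop D h v w ↔ h v = h w - 3 :=
  drop_comm.trans (drop_iff he)

/-- Heights change by `-3` or `+1` along every directed edge of the domain. -/
def StepValid (D : Set Cell) (h : Vertex → ℤ) : Prop :=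
  ∀ v w : Vertex, EdgeInDomain D v w → h w = h v - 3 ∨ h w = h v + 1

lemma IsHeightFunction.stepValid {D O T h} (H : IsHeightFunction D O T h) :
    StepValid D h := by
  intro v w he
  by_cases hx : ∃ d ∈ T, IsCentralAxis d v w
  · exact Or.inl ((H.2 v w he).1 hx)
  · exact Or.inr ((H.2 v w he).2 hx)

lemma edge_of_cell {D : Set Cell} {c : Cell} (hc : c ∈ D) {v w : Vertex}
    (hd : IsDirEdge v w) (hv : v ∈ cornersOf c) (hw : w ∈ cornersOf c) :
    EdgeInDomain D v w := ⟨hd, c, hc, hv, hw⟩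

/-- The four (undirected) edges of a cell of the domain are in the domain,
with appropriate directions. Even case: cycle (a,b) → (a,b+1) → (a+1,b+1) → (a+1,b) → (a,b). -/
lemma cell_edges_even {D : Set Cell} {a b : ℤ} (hc : ((a, b) : Cell) ∈ D)
    (hp : Even (a + b)) :
    EdgeInDomain D (a, b) (a, b + 1) ∧ EdgeInDomain D (a, b + 1) (a + 1, b + 1) ∧
    EdgeInDomain D (a + 1, b + 1) (a + 1, b) ∧ EdgeInDomain D (a + 1, b) (a, b) := by
  refine ⟨edge_of_cell hc ?_ ?_ ?_, edge_of_cell hc ?_ ?_ ?_,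
    edge_of_cell hc ?_ ?_ ?_, edge_of_cell hc ?_ ?_ ?_⟩ <;>
    (try simp [IsDirEdge, cornersOf, Prod.ext_iff, Int.even_iff] at *) <;> omega

lemma cell_edges_odd {D : Set Cell} {a b : ℤ} (hc : ((a, b) : Cell) ∈ D)
    (hp : ¬ Even (a + b)) :
    EdgeInDomain D (a, b) (a + 1, b) ∧ EdgeInDomain D (a + 1, b) (a + 1, b + 1) ∧
    EdgeInDomain D (a + 1, b + 1) (a, b + 1) ∧ EdgeInDomain D (a, b + 1) (a, b) := by
  refine ⟨edge_of_cell hc ?_ ?_ ?_, edge_of_cell hc ?_ ?_ ?_,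
    edge_of_cell hc ?_ ?_ ?_, edge_of_cell hc ?_ ?_ ?_⟩ <;>
    (try simp [IsDirEdge, cornersOf, Prod.ext_iff, Int.even_iff] at *) <;> omega

/-- Exactly one side of each cell of the domain carries a drop.
Sides: B = bottom, L = left, R = right, U = top (as vertex pairs). -/
lemma cell_drop {D : Set Cell} {h : Vertex → ℤ} {a b : ℤ}
    (hc : ((a, b) : Cell) ∈ D) (sv : StepValid D h) :
    (Drop D h (a, b) (a + 1, b) ∧ ¬ Drop D h (a, b) (a, b + 1) ∧
      ¬ Drop D h (a + 1, b) (a + 1, b + 1) ∧ ¬ Drop D h (a, b + 1) (a + 1, b + 1)) ∨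
    (¬ Drop D h (a, b) (a + 1, b) ∧ Drop D h (a, b) (a, b + 1) ∧
      ¬ Drop D h (a + 1, b) (a + 1, b + 1) ∧ ¬ Drop D h (a, b + 1) (a + 1, b + 1)) ∨
    (¬ Drop D h (a, b) (a + 1, b) ∧ ¬ Drop D h (a, b) (a, b + 1) ∧
      Drop D h (a + 1, b) (a + 1, b + 1) ∧ ¬ Drop D h (a, b + 1) (a + 1, b + 1)) ∨
    (¬ Drop D h (a, b) (a + 1, b) ∧ ¬ Drop D h (a, b) (a, b + 1) ∧
      ¬ Drop D h (a + 1, b) (a + 1, b + 1) ∧ Drop D h (a, b + 1) (a + 1, b + 1)) := by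
  by_cases hp : Even (a + b)
  · obtain ⟨e1, e2, e3, e4⟩ := cell_edges_even hc hp
    rw [drop_iff_rev e4, drop_iff e1, drop_iff_rev e3, drop_iff e2]
    have s1 := sv _ _ e1; have s2 := sv _ _ e2; have s3 := sv _ _ e3; have s4 := sv _ _ e4
    omega
  · obtain ⟨e1, e2, e3, e4⟩ := cell_edges_odd hc hp
    rw [drop_iff e1, drop_iff_rev e4, drop_iff e2, drop_iff_rev e3]
    have s1 := sv _ _ e1; have s2 := sv _ _ e2; have s3 := sv _ _ e3; have s4 := sv _ _ e4
    omega

/-! ### Pair classification helpers -/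

lemma hpair_ne_vpair {a b x y : ℤ} :
    ({((a, b) : Vertex), (a + 1, b)} : Set Vertex) ≠ {(x, y), (x, y + 1)} := by
  rw [Ne, Set.pair_eq_pair_iff]
  simp only [Prod.ext_iff]
  omega

lemma hpair_inj {a b x y : ℤ}
    (h : ({((a, b) : Vertex), (a + 1, b)} : Set Vertex) = {(x, y), (x + 1, y)}) :
    a = x ∧ b = y := by
  rw [Set.pair_eq_pair_iff] at h
  simp only [Prod.ext_iff] at h
  omega

lemma vpair_inj {a b x y : ℤ}
    (h : ({((a, b) : Vertex), (a, b + 1)} : Set Vertex) = {(x, y), (x, y + 1)}) :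
    a = x ∧ b = y := by
  rw [Set.pair_eq_pair_iff] at h
  simp only [Prod.ext_iff] at h
  omega

lemma axis_comm {d : Set Cell} {v w : Vertex} (h : IsCentralAxis d v w) :
    IsCentralAxis d w v := by
  obtain ⟨a, b, hc⟩ := h
  exact ⟨a, b, by rwa [Set.pair_comm w v]⟩

/-- Classification of central axes: the axis pair and the domino, in canonical
form centered at the vertex `(x,y)`. -/
lemma axis_cases {d : Set Cell} {p q : Vertex} (h : IsCentralAxis d p q) :
    ∃ x y : ℤ,
      (({p, q} : Set Vertex) = {(x, y), (x, y + 1)} ∧ d = {(x - 1, y), (x, y)}) ∨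
      (({p, q} : Set Vertex) = {(x, y), (x + 1, y)} ∧ d = {(x, y - 1), (x, y)}) := by
  obtain ⟨a, b, hc⟩ := h
  rcases hc with ⟨hd, hpq⟩ | ⟨hd, hpq⟩
  · exact ⟨a + 1, b, Or.inl ⟨hpq, by rw [hd, show (a + 1 - 1 : ℤ) = a from by ring]⟩⟩
  · exact ⟨a, b + 1, Or.inr ⟨hpq, by rw [hd, show (b + 1 - 1 : ℤ) = b from by ring]⟩⟩

lemma axis_vert_mk (x y : ℤ) :
    IsCentralAxis {((x - 1, y) : Cell), (x, y)} (x, y) (x, y + 1) :=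
  ⟨x - 1, y, Or.inl (by rw [show (x - 1 + 1 : ℤ) = x from by ring]; exact ⟨rfl, rfl⟩)⟩

lemma axis_horiz_mk (x y : ℤ) :
    IsCentralAxis {((x, y - 1) : Cell), (x, y)} (x, y) (x + 1, y) :=
  ⟨x, y - 1, Or.inr (by rw [show (y - 1 + 1 : ℤ) = y from by ring]; exact ⟨rfl, rfl⟩)⟩

/-! ### The tiling constructed from a height function -/

def TilingOf (D : Set Cell) (h : Vertex → ℤ) : Set (Set Cell) :=
  {d | ∃ a b : ℤ,
    (d = {(a, b), (a + 1, b)} ∧ (a, b) ∈ D ∧ (a + 1, b) ∈ D ∧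
      Drop D h (a + 1, b) (a + 1, b + 1)) ∨
    (d = {(a, b), (a, b + 1)} ∧ (a, b) ∈ D ∧ (a, b + 1) ∈ D ∧
      Drop D h (a, b + 1) (a + 1, b + 1))}

/-- Every drop edge has both adjacent cells inside the domain. -/
def DropsInterior (D : Set Cell) (h : Vertex → ℤ) : Prop :=
  ∀ v w : Vertex, EdgeInDomain D v w → h w = h v - 3 →
    ∃ d, d ⊆ D ∧ IsCentralAxis d v w

lemma drop_to_axis {D : Set Cell} {h : Vertex → ℤ} {v w : Vertex}
    (di : DropsInterior D h) (hd : Drop D h v w) :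
    ∃ d, d ⊆ D ∧ IsCentralAxis d v w := by
  rcases hd with ⟨e, hq⟩ | ⟨e, hq⟩
  · exact di _ _ e hq
  · obtain ⟨d, hdD, hax⟩ := di _ _ e hq
    exact ⟨d, hdD, axis_comm hax⟩

lemma mem_tilingOf_elim {D : Set Cell} {h : Vertex → ℤ} {d : Set Cell} {a b : ℤ}
    (hd : d ∈ TilingOf D h) (hc : ((a, b) : Cell) ∈ d) :
    ((a, b) : Cell) ∈ D ∧ (
      (d = {(a, b), (a + 1, b)} ∧ Drop D h (a + 1, b) (a + 1, b + 1)) ∨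
      (d = {(a - 1, b), (a, b)} ∧ Drop D h (a, b) (a, b + 1)) ∨
      (d = {(a, b), (a, b + 1)} ∧ Drop D h (a, b + 1) (a + 1, b + 1)) ∨
      (d = {(a, b - 1), (a, b)} ∧ Drop D h (a, b) (a + 1, b))) := by
  obtain ⟨a', b', hm⟩ := hd
  rcases hm with ⟨hdv, h1, h2, hdrop⟩ | ⟨hdv, h1, h2, hdrop⟩
  · rw [hdv] at hc
    simp only [Set.mem_insert_iff, Set.mem_singleton_iff, Prod.mk.injEq] at hc
    rcases hc with ⟨hc1, hc2⟩ | ⟨hc1, hc2⟩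
    · obtain ⟨rfl, rfl⟩ : a' = a ∧ b' = b := by omega
      exact ⟨h1, Or.inl ⟨hdv, hdrop⟩⟩
    · obtain ⟨rfl, rfl⟩ : a' = a - 1 ∧ b' = b := by omega
      simp only [show (a - 1 + 1 : ℤ) = a from by ring] at hdv h2 hdrop
      exact ⟨h2, Or.inr (Or.inl ⟨hdv, hdrop⟩)⟩
  · rw [hdv] at hc
    simp only [Set.mem_insert_iff, Set.mem_singleton_iff, Prod.mk.injEq] at hc
    rcases hc with ⟨hc1, hc2⟩ | ⟨hc1, hc2⟩
    · obtain ⟨rfl, rfl⟩ : a' = a ∧ b' = b := by omega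
      exact ⟨h1, Or.inr (Or.inr (Or.inl ⟨hdv, hdrop⟩))⟩
    · obtain ⟨rfl, rfl⟩ : a' = a ∧ b' = b - 1 := by omega
      simp only [show (b - 1 + 1 : ℤ) = b from by ring] at hdv h2 hdrop
      exact ⟨h2, Or.inr (Or.inr (Or.inr ⟨hdv, hdrop⟩))⟩

lemma tilingOf_pairwiseDisjoint {D : Set Cell} {h : Vertex → ℤ}
    (sv : StepValid D h) : (TilingOf D h).PairwiseDisjoint id := by
  intro d1 h1 d2 h2 hne
  rw [Function.onFun, Set.disjoint_left]
  intro c hc1 hc2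
  obtain ⟨a, b⟩ := c
  obtain ⟨hcD, k1⟩ := mem_tilingOf_elim h1 hc1
  obtain ⟨-, k2⟩ := mem_tilingOf_elim h2 hc2
  have hcd := cell_drop (h := h) hcD sv
  apply hne
  rcases k1 with ⟨e1, d1'⟩ | ⟨e1, d1'⟩ | ⟨e1, d1'⟩ | ⟨e1, d1'⟩ <;>
    rcases k2 with ⟨e2, d2'⟩ | ⟨e2, d2'⟩ | ⟨e2, d2'⟩ | ⟨e2, d2'⟩ <;>
      first
        | (exfalso; tauto)
        | (rw [e1, e2])

lemma mem_of_pair_left {α : Type*} {x y : α} : x ∈ ({x, y} : Set α) := Or.inl rfl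
lemma mem_of_pair_right {α : Type*} {x y : α} : y ∈ ({x, y} : Set α) := Or.inr rfl

lemma tilingOf_sUnion {D : Set Cell} {h : Vertex → ℤ}
    (sv : StepValid D h) (di : DropsInterior D h) : ⋃₀ TilingOf D h = D := by
  apply Set.Subset.antisymm
  · rintro c ⟨d, hd, hc⟩
    obtain ⟨a, b⟩ := c
    exact (mem_tilingOf_elim hd hc).1
  · rintro ⟨a, b⟩ hc
    rcases cell_drop (h := h) hc sv with ⟨hB, -, -, -⟩ | ⟨-, hL, -, -⟩ | ⟨-, -, hR, -⟩ | ⟨-, -, -, hU⟩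
    · -- bottom side drops: d = {(a,b-1),(a,b)}
      obtain ⟨d, hdD, hax⟩ := drop_to_axis di hB
      obtain ⟨x, y, hcs⟩ := axis_cases hax
      rcases hcs with ⟨hpq, -⟩ | ⟨hpq, hdv⟩
      · exact absurd hpq hpair_ne_vpair
      · obtain ⟨rfl, rfl⟩ := hpair_inj hpq
        refine ⟨{(a, b - 1), (a, b)}, ⟨a, b - 1, Or.inr ⟨?_, ?_, ?_, ?_⟩⟩, mem_of_pair_right⟩
        · rw [show (b - 1 + 1 : ℤ) = b from by ring]
        · rw [hdv] at hdD; exact hdD mem_of_pair_left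
        · rw [show (b - 1 + 1 : ℤ) = b from by ring]; exact hc
        · rw [show (b - 1 + 1 : ℤ) = b from by ring]; exact hB
    · -- left side drops: d = {(a-1,b),(a,b)}
      obtain ⟨d, hdD, hax⟩ := drop_to_axis di hL
      obtain ⟨x, y, hcs⟩ := axis_cases hax
      rcases hcs with ⟨hpq, hdv⟩ | ⟨hpq, -⟩
      · obtain ⟨rfl, rfl⟩ := vpair_inj hpq
        refine ⟨{(a - 1, b), (a, b)}, ⟨a - 1, b, Or.inl ⟨?_, ?_, ?_, ?_⟩⟩, mem_of_pair_right⟩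
        · rw [show (a - 1 + 1 : ℤ) = a from by ring]
        · rw [hdv] at hdD; exact hdD mem_of_pair_left
        · rw [show (a - 1 + 1 : ℤ) = a from by ring]; exact hc
        · rw [show (a - 1 + 1 : ℤ) = a from by ring]; exact hL
      · rw [Set.pair_eq_pair_iff] at hpq
        simp only [Prod.ext_iff] at hpq; omega
    · -- right side drops: d = {(a,b),(a+1,b)}
      exact ⟨{(a, b), (a + 1, b)}, ⟨a, b, Or.inl ⟨rfl, hc, by
        obtain ⟨d, hdD, hax⟩ := drop_to_axis di hR
        obtain ⟨x, y, hcs⟩ := axis_cases hax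
        rcases hcs with ⟨hpq, hdv⟩ | ⟨hpq, -⟩
        · have h2 : a + 1 = x ∧ b = y := by
            rw [Set.pair_eq_pair_iff] at hpq; simp only [Prod.ext_iff] at hpq; omega
          obtain ⟨h2a, h2b⟩ := h2
          apply hdD; rw [hdv]
          simp only [Set.mem_insert_iff, Set.mem_singleton_iff, Prod.mk.injEq]; omega
        · rw [Set.pair_eq_pair_iff] at hpq
          simp only [Prod.ext_iff] at hpq; omega, hR⟩⟩, mem_of_pair_left⟩
    · -- top side drops: d = {(a,b),(a,b+1)}
      exact ⟨{(a, b), (a, b + 1)}, ⟨a, b, Or.inr ⟨rfl, hc, by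
        obtain ⟨d, hdD, hax⟩ := drop_to_axis di hU
        obtain ⟨x, y, hcs⟩ := axis_cases hax
        rcases hcs with ⟨hpq, -⟩ | ⟨hpq, hdv⟩
        · rw [Set.pair_eq_pair_iff] at hpq
          simp only [Prod.ext_iff] at hpq; omega
        · have h2 : a = x ∧ b + 1 = y := by
            rw [Set.pair_eq_pair_iff] at hpq; simp only [Prod.ext_iff] at hpq; omega
          obtain ⟨h2a, h2b⟩ := h2
          apply hdD; rw [hdv]
          simp only [Set.mem_insert_iff, Set.mem_singleton_iff, Prod.mk.injEq]; omega, hU⟩⟩, mem_of_pair_left⟩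

lemma tilingOf_isTiling {D : Set Cell} {h : Vertex → ℤ}
    (sv : StepValid D h) (di : DropsInterior D h) : IsTiling D (TilingOf D h) := by
  refine ⟨?_, tilingOf_pairwiseDisjoint sv, tilingOf_sUnion sv di⟩
  rintro d ⟨a, b, hm⟩
  rcases hm with ⟨hd, -⟩ | ⟨hd, -⟩
  · exact ⟨a, b, Or.inl hd⟩
  · exact ⟨a, b, Or.inr hd⟩

lemma drop_of_pair {D : Set Cell} {h : Vertex → ℤ} {v w p q : Vertex}
    (he : EdgeInDomain D v w) (hd : h w = h v - 3)
    (hpq : ({v, w} : Set Vertex) = {p, q}) : Drop D h p q := by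
  rw [Set.pair_eq_pair_iff] at hpq
  rcases hpq with ⟨rfl, rfl⟩ | ⟨rfl, rfl⟩
  · exact Or.inl ⟨he, hd⟩
  · exact Or.inr ⟨he, hd⟩

lemma pair_drop {D : Set Cell} {h : Vertex → ℤ} {v w p q : Vertex}
    (he : EdgeInDomain D v w) (hdr : Drop D h p q)
    (hpq : ({v, w} : Set Vertex) = {p, q}) : h w = h v - 3 := by
  rw [Set.pair_eq_pair_iff] at hpq
  rcases hpq with ⟨rfl, rfl⟩ | ⟨rfl, rfl⟩
  · exact (drop_iff he).mp hdr
  · exact (drop_iff he).mp (drop_comm.mp hdr)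

lemma tilingOf_heightFunction {D : Set Cell} {O : Vertex} {h : Vertex → ℤ}
    (h0 : h O = 0) (sv : StepValid D h) (di : DropsInterior D h) :
    IsHeightFunction D O (TilingOf D h) h := by
  refine ⟨h0, fun v w he => ⟨?_, ?_⟩⟩
  · rintro ⟨d, hdT, hax⟩
    obtain ⟨x, y, hc⟩ := axis_cases hax
    obtain ⟨a, b, hm⟩ := hdT
    rcases hc with ⟨hpq, hdv⟩ | ⟨hpq, hdv⟩ <;>
      rcases hm with ⟨hd2, -, -, hdrop⟩ | ⟨hd2, -, -, hdrop⟩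
    · -- vertical axis, horizontal domino
      rw [hdv, show ({((x - 1, y) : Cell), (x, y)} : Set Cell)
            = {(x - 1, y), (x - 1 + 1, y)} from by rw [show (x-1+1:ℤ) = x from by ring]] at hd2
      obtain ⟨ha, hb⟩ := hpair_inj hd2
      subst ha; subst hb
      refine pair_drop he ?_ hpq
      simpa only [show (x - 1 + 1 : ℤ) = x from by ring] using hdrop
    · -- vertical axis, vertical domino: impossible
      exfalso
      rw [hdv, show ({((x - 1, y) : Cell), (x, y)} : Set Cell)
            = {(x - 1, y), (x - 1 + 1, y)} from by rw [show (x-1+1:ℤ) = x from by ring]] at hd2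
      exact hpair_ne_vpair hd2
    · -- horizontal axis, horizontal domino: impossible
      exfalso
      rw [hdv, show ({((x, y - 1) : Cell), (x, y)} : Set Cell)
            = {(x, y - 1), (x, y - 1 + 1)} from by rw [show (y-1+1:ℤ) = y from by ring]] at hd2
      exact hpair_ne_vpair hd2.symm
    · -- horizontal axis, vertical domino
      rw [hdv, show ({((x, y - 1) : Cell), (x, y)} : Set Cell)
            = {(x, y - 1), (x, y - 1 + 1)} from by rw [show (y-1+1:ℤ) = y from by ring]] at hd2
      obtain ⟨ha, hb⟩ := vpair_inj hd2
      subst ha; subst hb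
      refine pair_drop he ?_ hpq
      simpa only [show (y - 1 + 1 : ℤ) = y from by ring] using hdrop
  · intro hnax
    rcases sv v w he with hdrop | hplus
    · exfalso; apply hnax
      obtain ⟨d, hdD, hax⟩ := di v w he hdrop
      refine ⟨d, ?_, hax⟩
      obtain ⟨x, y, hc⟩ := axis_cases hax
      rcases hc with ⟨hpq, hdv⟩ | ⟨hpq, hdv⟩
      · refine ⟨x - 1, y, Or.inl ⟨?_, ?_, ?_, ?_⟩⟩ <;>
          try rw [show (x - 1 + 1 : ℤ) = x from by ring]
        · exact hdv
        · rw [hdv] at hdD; exact hdD mem_of_pair_left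
        · rw [hdv] at hdD; exact hdD mem_of_pair_right
        · exact drop_of_pair he hdrop hpq
      · refine ⟨x, y - 1, Or.inr ⟨?_, ?_, ?_, ?_⟩⟩ <;>
          try rw [show (y - 1 + 1 : ℤ) = y from by ring]
        · exact hdv
        · rw [hdv] at hdD; exact hdD mem_of_pair_left
        · rw [hdv] at hdD; exact hdD mem_of_pair_right
        · exact drop_of_pair he hdrop hpq
    · exact hplus
/-! ### Connectivity of the vertex graph -/

def Reach (D : Set Cell) : Vertex → Vertex → Prop :=
  Relation.ReflTransGen (EdgeSym D)

lemma edgeSym_symm {D : Set Cell} {v w : Vertex} (h : EdgeSym D v w) : EdgeSym D w v :=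
  h.symm

lemma reach_symm {D : Set Cell} {v w : Vertex} (h : Reach D v w) : Reach D w v :=
  haveI : Std.Symm (EdgeSym D) := ⟨fun _ _ => edgeSym_symm⟩
  Std.Symm.symm (r := Relation.ReflTransGen (EdgeSym D)) _ _ h

lemma corner_mem_square {v : Vertex} {c : Cell} (h : v ∈ cornersOf c) :
    embedV v ∈ cellSquare c := by
  rcases mem_cornersOf.mp h with rfl | rfl | rfl | rfl <;>
    · simp only [cellSquare, embedV, Set.mem_Icc, Prod.le_def]
      push_cast
      refine ⟨⟨?_, ?_⟩, ?_, ?_⟩ <;> simp <;> linarith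

lemma corner_isVertex {D : Set Cell} {v : Vertex} {c : Cell} (hc : c ∈ D)
    (h : v ∈ cornersOf c) : IsVertexOf D v :=
  Set.mem_biUnion hc (corner_mem_square h)

lemma vertex_corner {D : Set Cell} {v : Vertex} (h : IsVertexOf D v) :
    ∃ c ∈ D, v ∈ cornersOf c := by
  obtain ⟨c, hc, hm⟩ := Set.mem_iUnion₂.mp h
  refine ⟨c, hc, ?_⟩
  obtain ⟨⟨h1, h2⟩, h3, h4⟩ := hm
  simp only [embedV] at h1 h2 h3 h4
  have e1 : c.1 ≤ v.1 := by exact_mod_cast h1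
  have e2 : c.2 ≤ v.2 := by exact_mod_cast h2
  have e3 : v.1 ≤ c.1 + 1 := by exact_mod_cast h3
  have e4 : v.2 ≤ c.2 + 1 := by exact_mod_cast h4
  rw [mem_cornersOf, Prod.ext_iff, Prod.ext_iff, Prod.ext_iff, Prod.ext_iff]
  simp only [Prod.mk.eta]
  omega

lemma reach_in_cell {D : Set Cell} {a b : ℤ} (hc : ((a, b) : Cell) ∈ D)
    {p q : Vertex} (hp : p ∈ cornersOf (a, b)) (hq : q ∈ cornersOf (a, b)) :
    Reach D p q := by
  have base : ∀ r ∈ cornersOf ((a, b) : Cell), Reach D (a, b) r := by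
    intro r hr
    by_cases hpar : Even (a + b)
    · obtain ⟨e1, e2, e3, e4⟩ := cell_edges_even hc hpar
      have r1 : Reach D (a, b) (a, b + 1) := Relation.ReflTransGen.single (Or.inl e1)
      have r2 : Reach D (a, b) (a + 1, b + 1) :=
        r1.tail (Or.inl e2)
      have r3 : Reach D (a, b) (a + 1, b) := r2.tail (Or.inl e3)
      rcases mem_cornersOf.mp hr with rfl | rfl | rfl | rfl
      · exact Relation.ReflTransGen.refl
      · exact r3
      · exact r1
      · exact r2
    · obtain ⟨e1, e2, e3, e4⟩ := cell_edges_odd hc hpar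
      have r1 : Reach D (a, b) (a + 1, b) := Relation.ReflTransGen.single (Or.inl e1)
      have r2 : Reach D (a, b) (a + 1, b + 1) := r1.tail (Or.inl e2)
      have r3 : Reach D (a, b) (a, b + 1) := r2.tail (Or.inl e3)
      rcases mem_cornersOf.mp hr with rfl | rfl | rfl | rfl
      · exact Relation.ReflTransGen.refl
      · exact r1
      · exact r3
      · exact r2
  exact (reach_symm (base p hp)).trans (base q hq)

lemma cells_share_corner {c c' : Cell} {x : ℝ × ℝ}
    (h : x ∈ cellSquare c) (h' : x ∈ cellSquare c') :
    ∃ v : Vertex, v ∈ cornersOf c ∧ v ∈ cornersOf c' := by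
  simp only [cellSquare, Set.mem_Icc, Prod.le_def] at h h'
  obtain ⟨⟨h1, h2⟩, h3, h4⟩ := h
  obtain ⟨⟨h1', h2'⟩, h3', h4'⟩ := h'
  have e1 : c.1 ≤ c'.1 + 1 := by exact_mod_cast h1.trans h3'
  have e2 : c'.1 ≤ c.1 + 1 := by exact_mod_cast h1'.trans h3
  have e3 : c.2 ≤ c'.2 + 1 := by exact_mod_cast h2.trans h4'
  have e4 : c'.2 ≤ c.2 + 1 := by exact_mod_cast h2'.trans h4
  refine ⟨(max c.1 c'.1, max c.2 c'.2), ?_, ?_⟩ <;>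
    · rw [mem_cornersOf, Prod.ext_iff, Prod.ext_iff, Prod.ext_iff, Prod.ext_iff]
      simp only [Prod.mk.eta]
      omega

lemma region_closed {D : Set Cell} (hD : D.Finite) : IsClosed (regionOf D) :=
  hD.isClosed_biUnion (fun _ _ => isClosed_Icc)

lemma reach_of_vertices {D : Set Cell} (hD : IsDomain D) {v w : Vertex}
    (hv : IsVertexOf D v) (hw : IsVertexOf D w) : Reach D v w := by
  classical
  set Good : Set Cell := {c | c ∈ D ∧ ∃ p ∈ cornersOf c, Reach D v p} with hGood
  have hGsub : Good ⊆ D := fun c hc => hc.1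
  have hGall : ∀ c ∈ Good, ∀ p ∈ cornersOf c, Reach D v p := by
    rintro c ⟨hcD, p, hp, hrp⟩ q hq
    obtain ⟨a, b⟩ := c
    exact hrp.trans (reach_in_cell hcD hp hq)
  obtain ⟨cw, hcw, hwc⟩ := vertex_corner hw
  by_cases hgw : cw ∈ Good
  · exact hGall cw hgw w hwc
  -- otherwise derive a contradiction
  exfalso
  set A : Set (ℝ × ℝ) := ⋃ c ∈ Good, cellSquare c with hA
  set B : Set (ℝ × ℝ) := ⋃ c ∈ D \ Good, cellSquare c with hB
  have hAB : A ∪ B = regionOf D := by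
    rw [hA, hB, ← Set.biUnion_union, Set.union_diff_cancel hGsub]
    rfl
  have hdisj : Disjoint A B := by
    rw [Set.disjoint_left]
    rintro x hxA hxB
    obtain ⟨c, hcG, hxc⟩ := Set.mem_iUnion₂.mp hxA
    obtain ⟨c', hc'B, hxc'⟩ := Set.mem_iUnion₂.mp hxB
    obtain ⟨p, hpc, hpc'⟩ := cells_share_corner hxc hxc'
    exact hc'B.2 ⟨hc'B.1, p, hpc', hGall c hcG p hpc⟩
  have hAcomp : IsCompact A :=
    (hD.finite.subset hGsub).isCompact_biUnion (fun _ _ => isCompact_Icc)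
  have hBcomp : IsCompact B :=
    (hD.finite.subset Set.diff_subset).isCompact_biUnion (fun _ _ => isCompact_Icc)
  obtain ⟨U, V, hUo, hVo, hAU, hBV, hUV⟩ :=
    SeparatedNhds.of_isCompact_isCompact hAcomp hBcomp hdisj
  haveI := hD.simplyConnected
  have hpc : IsPreconnected (regionOf D) :=
    (isConnected_iff_connectedSpace.mpr inferInstance).isPreconnected
  have hsub : regionOf D ⊆ U ∪ V := by
    rw [← hAB]; exact Set.union_subset_union hAU hBV
  -- A and B are nonempty
  obtain ⟨cv, hcv, hvc⟩ := vertex_corner hv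
  have hAne : (embedV v) ∈ A :=
    Set.mem_biUnion ⟨hcv, v, hvc, Relation.ReflTransGen.refl⟩ (corner_mem_square hvc)
  have hBne : (embedV cw) ∈ B :=
    Set.mem_biUnion ⟨hcw, hgw⟩ (corner_mem_square (Set.mem_insert _ _))
  rcases hpc.subset_or_subset hUo hVo hUV hsub with hs | hs
  · exact Set.disjoint_left.mp hUV (hs (hAB ▸ Set.mem_union_right A hBne)) (hBV hBne)
  · exact Set.disjoint_left.mp hUV (hAU hAne) (hs (hAB ▸ Set.mem_union_left B hAne))
/-! ### Uniqueness of height functions, mod 4 congruence, minimum -/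

lemma heightFunction_unique {D : Set Cell} {O : Vertex} {T : Set (Set Cell)}
    {h h' : Vertex → ℤ} (H : IsHeightFunction D O T h) (H' : IsHeightFunction D O T h')
    {v : Vertex} (hr : Reach D O v) : h v = h' v := by
  induction hr with
  | refl => rw [H.1, H'.1]
  | tail _ e ih =>
    rename_i b c _
    rcases e with e | e
    · by_cases hx : ∃ d ∈ T, IsCentralAxis d b c
      · rw [(H.2 b c e).1 hx, (H'.2 b c e).1 hx, ih]
      · rw [(H.2 b c e).2 hx, (H'.2 b c e).2 hx, ih]
    · by_cases hx : ∃ d ∈ T, IsCentralAxis d c b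
      · have := (H.2 c b e).1 hx
        have := (H'.2 c b e).1 hx
        omega
      · have := (H.2 c b e).2 hx
        have := (H'.2 c b e).2 hx
        omega

lemma heights_mod4 {D : Set Cell} {h1 h2 : Vertex → ℤ}
    (sv1 : StepValid D h1) (sv2 : StepValid D h2) {O v : Vertex}
    (h01 : h1 O = 0) (h02 : h2 O = 0) (hr : Reach D O v) :
    (h1 v - h2 v) % 4 = 0 := by
  induction hr with
  | refl => omega
  | tail _ e ih =>
    rename_i b c _
    rcases e with e | e
    · have s1 := sv1 _ _ e
      have s2 := sv2 _ _ e
      omega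
    · have s1 := sv1 _ _ e
      have s2 := sv2 _ _ e
      omega

lemma edge_endpoints_vertex {D : Set Cell} {v w : Vertex} (e : EdgeInDomain D v w) :
    IsVertexOf D v ∧ IsVertexOf D w := by
  obtain ⟨-, c, hc, hv, hw⟩ := e
  exact ⟨corner_isVertex hc hv, corner_isVertex hc hw⟩

/-- The pointwise min of two height functions is step-valid. -/
lemma min_stepValid {D : Set Cell} (hD : IsDomain D) {O : Vertex}
    (hO : IsVertexOf D O) {h1 h2 : Vertex → ℤ}
    (sv1 : StepValid D h1) (sv2 : StepValid D h2)
    (h01 : h1 O = 0) (h02 : h2 O = 0) :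
    StepValid D (fun v => min (h1 v) (h2 v)) := by
  intro v w e
  obtain ⟨hv, hw⟩ := edge_endpoints_vertex e
  have m1 := heights_mod4 sv1 sv2 h01 h02 (reach_of_vertices hD hO hv)
  have s1 := sv1 _ _ e
  have s2 := sv2 _ _ e
  simp only
  omega

lemma min_dropsInterior {D : Set Cell} (hD : IsDomain D) {O : Vertex}
    (hO : IsVertexOf D O) {h1 h2 : Vertex → ℤ}
    (sv1 : StepValid D h1) (sv2 : StepValid D h2)
    (h01 : h1 O = 0) (h02 : h2 O = 0)
    (di1 : DropsInterior D h1) (di2 : DropsInterior D h2) :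
    DropsInterior D (fun v => min (h1 v) (h2 v)) := by
  intro v w e hdrop
  obtain ⟨hv, hw⟩ := edge_endpoints_vertex e
  have m1 := heights_mod4 sv1 sv2 h01 h02 (reach_of_vertices hD hO hv)
  have s1 := sv1 _ _ e
  have s2 := sv2 _ _ e
  simp only at hdrop
  have : h1 w = h1 v - 3 ∨ h2 w = h2 v - 3 := by omega
  rcases this with hd | hd
  · exact di1 v w e hd
  · exact di2 v w e hd

/-- A height function of a tiling has interior drops. -/
lemma heightFunction_dropsInterior {D : Set Cell} {O : Vertex} {T : Set (Set Cell)}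
    {h : Vertex → ℤ} (hT : IsTiling D T) (H : IsHeightFunction D O T h) :
    DropsInterior D h := by
  intro v w e hdrop
  by_cases hx : ∃ d ∈ T, IsCentralAxis d v w
  · obtain ⟨d, hdT, hax⟩ := hx
    refine ⟨d, ?_, hax⟩
    rw [← hT.2.2]
    exact fun c hc => ⟨d, hdT, hc⟩
  · have := (H.2 v w e).2 hx
    omega

/-! ### Interior vertices have their four surrounding cells in the domain -/

lemma cell_of_point {c : Cell} {x y : ℝ} (hm : ((x, y) : ℝ × ℝ) ∈ cellSquare c)
    {a b : ℤ} (hx1 : (a : ℝ) < x) (hx2 : x < a + 1) (hy1 : (b : ℝ) < y)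
    (hy2 : y < b + 1) : c = (a, b) := by
  simp only [cellSquare, Set.mem_Icc, Prod.le_def] at hm
  obtain ⟨⟨h1, h2⟩, h3, h4⟩ := hm
  have e1 : (c.1 : ℝ) < a + 1 := lt_of_le_of_lt h1 hx2
  have e2 : (a : ℝ) < c.1 + 1 := lt_of_lt_of_le hx1 h3
  have e3 : (c.2 : ℝ) < b + 1 := lt_of_le_of_lt h2 hy2
  have e4 : (b : ℝ) < c.2 + 1 := lt_of_lt_of_le hy1 h4
  have f1 : c.1 < a + 1 := by exact_mod_cast e1
  have f2 : a < c.1 + 1 := by exact_mod_cast e2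
  have f3 : c.2 < b + 1 := by exact_mod_cast e3
  have f4 : b < c.2 + 1 := by exact_mod_cast e4
  rw [Prod.ext_iff]
  constructor <;> simp <;> omega

lemma interior_vertex_cells {D : Set Cell} (hD : IsDomain D) {v : Vertex}
    (hv : IsInteriorVertexOf D v) :
    (v.1 - 1, v.2 - 1) ∈ D ∧ (v.1, v.2 - 1) ∈ D ∧ (v.1 - 1, v.2) ∈ D ∧ (v.1, v.2) ∈ D := by
  have hcl : IsClosed (regionOf D) := region_closed hD.finite
  have hint : embedV v ∈ interior (regionOf D) := by
    have h2 := hv.2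
    rw [hcl.frontier_eq] at h2
    rw [Set.mem_diff] at h2
    push_neg at h2
    exact h2 hv.1
  obtain ⟨ε, hε, hball⟩ := Metric.isOpen_iff.mp isOpen_interior _ hint
  set δ : ℝ := min ε 1 / 2 with hδdef
  have hδ0 : 0 < δ := by
    rw [hδdef]; positivity
  have hδ1 : δ < 1 := by
    rw [hδdef]
    have : min ε 1 ≤ 1 := min_le_right _ _
    linarith
  have hδε : δ < ε := by
    rw [hδdef]
    have : min ε 1 ≤ ε := min_le_left _ _
    linarith
  have hmem : ∀ s t : ℝ, |s| = δ → |t| = δ →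
      ((v.1 : ℝ) + s, (v.2 : ℝ) + t) ∈ regionOf D := by
    intro s t hs ht
    apply interior_subset
    apply hball
    rw [Metric.mem_ball, Prod.dist_eq]
    simp only [embedV, Real.dist_eq]
    rw [max_lt_iff]
    constructor
    · simpa [hs] using hδε
    · simpa [ht] using hδε
  have habs : |δ| = δ := abs_of_pos hδ0
  have habs' : |(-δ : ℝ)| = δ := by rw [abs_neg]; exact habs
  refine ⟨?_, ?_, ?_, ?_⟩
  · obtain ⟨c, hc, hm⟩ := Set.mem_iUnion₂.mp (hmem (-δ) (-δ) habs' habs')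
    have := cell_of_point hm (a := v.1 - 1) (b := v.2 - 1)
      (by push_cast; linarith) (by push_cast; linarith)
      (by push_cast; linarith) (by push_cast; linarith)
    rwa [this] at hc
  · obtain ⟨c, hc, hm⟩ := Set.mem_iUnion₂.mp (hmem δ (-δ) habs habs')
    have := cell_of_point hm (a := v.1) (b := v.2 - 1)
      (by push_cast; linarith) (by push_cast; linarith)
      (by push_cast; linarith) (by push_cast; linarith)
    rwa [this] at hc
  · obtain ⟨c, hc, hm⟩ := Set.mem_iUnion₂.mp (hmem (-δ) δ habs' habs)
    have := cell_of_point hm (a := v.1 - 1) (b := v.2)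
      (by push_cast; linarith) (by push_cast; linarith)
      (by push_cast; linarith) (by push_cast; linarith)
    rwa [this] at hc
  · obtain ⟨c, hc, hm⟩ := Set.mem_iUnion₂.mp (hmem δ δ habs habs)
    have := cell_of_point hm (a := v.1) (b := v.2)
      (by push_cast; linarith) (by push_cast; linarith)
      (by push_cast; linarith) (by push_cast; linarith)
    rwa [this] at hc
/-! ### Axis helper lemmas and retiling -/

lemma axis_pair_vert {d : Set Cell} {p q : Vertex} {x y : ℤ}
    (hax : IsCentralAxis d p q)
    (hpq : ({p, q} : Set Vertex) = {(x, y), (x, y + 1)}) :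
    d = {(x - 1, y), (x, y)} := by
  obtain ⟨x', y', hc⟩ := axis_cases hax
  rcases hc with ⟨hpq', hd⟩ | ⟨hpq', hd⟩
  · obtain ⟨rfl, rfl⟩ := vpair_inj (hpq.symm.trans hpq')
    exact hd
  · exact absurd (hpq.symm.trans hpq').symm hpair_ne_vpair

lemma axis_pair_horiz {d : Set Cell} {p q : Vertex} {x y : ℤ}
    (hax : IsCentralAxis d p q)
    (hpq : ({p, q} : Set Vertex) = {(x, y), (x + 1, y)}) :
    d = {(x, y - 1), (x, y)} := by
  obtain ⟨x', y', hc⟩ := axis_cases hax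
  rcases hc with ⟨hpq', hd⟩ | ⟨hpq', hd⟩
  · exact absurd (hpq.symm.trans hpq') hpair_ne_vpair
  · obtain ⟨rfl, rfl⟩ := hpair_inj (hpq.symm.trans hpq')
    exact hd

lemma axis_pair_of_horiz {d : Set Cell} {p q : Vertex} {a b : ℤ}
    (hax : IsCentralAxis d p q) (hd : d = {(a, b), (a + 1, b)}) :
    ({p, q} : Set Vertex) = {(a + 1, b), (a + 1, b + 1)} := by
  obtain ⟨x, y, hc⟩ := axis_cases hax
  rcases hc with ⟨hpq', hd'⟩ | ⟨hpq', hd'⟩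
  · rw [hd] at hd'
    rw [show ({((x - 1, y) : Cell), (x, y)} : Set Cell) = {(x - 1, y), (x - 1 + 1, y)} from by
      rw [show (x - 1 + 1 : ℤ) = x from by ring]] at hd'
    obtain ⟨ha, hb⟩ := hpair_inj hd'
    rw [hpq']
    rw [show (a + 1 : ℤ) = x from by omega, show (b : ℤ) = y from by omega]
  · rw [hd] at hd'
    rw [show ({((x, y - 1) : Cell), (x, y)} : Set Cell) = {(x, y - 1), (x, y - 1 + 1)} from by
      rw [show (y - 1 + 1 : ℤ) = y from by ring]] at hd'
    exact absurd hd' hpair_ne_vpair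

lemma axis_pair_of_vert {d : Set Cell} {p q : Vertex} {a b : ℤ}
    (hax : IsCentralAxis d p q) (hd : d = {(a, b), (a, b + 1)}) :
    ({p, q} : Set Vertex) = {(a, b + 1), (a + 1, b + 1)} := by
  obtain ⟨x, y, hc⟩ := axis_cases hax
  rcases hc with ⟨hpq', hd'⟩ | ⟨hpq', hd'⟩
  · rw [hd] at hd'
    rw [show ({((x - 1, y) : Cell), (x, y)} : Set Cell) = {(x - 1, y), (x - 1 + 1, y)} from by
      rw [show (x - 1 + 1 : ℤ) = x from by ring]] at hd'
    exact absurd hd'.symm hpair_ne_vpair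
  · rw [hd] at hd'
    rw [show ({((x, y - 1) : Cell), (x, y)} : Set Cell) = {(x, y - 1), (x, y - 1 + 1)} from by
      rw [show (y - 1 + 1 : ℤ) = y from by ring]] at hd'
    obtain ⟨ha, hb⟩ := vpair_inj hd'
    rw [hpq']
    rw [show (a : ℤ) = x from by omega, show (b + 1 : ℤ) = y from by omega]

/-- `d`'s central axis passes through `v`. -/
def AxThruV (v : Vertex) (d : Set Cell) : Prop :=
  ∀ p q : Vertex, IsCentralAxis d p q → v = p ∨ v = q

lemma retile {D : Set Cell} {T : Set (Set Cell)} (hT : IsTiling D T)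
    {d1 d2 e1 e2 : Set Cell} (h1 : d1 ∈ T) (h2 : d2 ∈ T) (hne : d1 ≠ d2)
    (he1 : IsDomino e1) (he2 : IsDomino e2) (hee : Disjoint e1 e2)
    (hcover : e1 ∪ e2 = d1 ∪ d2) :
    IsTiling D ((T \ {d1, d2}) ∪ {e1, e2}) := by
  obtain ⟨hdom, hpd, hun⟩ := hT
  have hsubpair : ({d1, d2} : Set (Set Cell)) ⊆ T := by
    intro d hd; rcases hd with rfl | rfl
    · exact h1
    · exact h2
  constructor
  · rintro d (⟨hdT, -⟩ | hd)
    · exact hdom d hdT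
    · rcases hd with rfl | rfl
      · exact he1
      · exact he2
  constructor
  · -- pairwise disjoint
    have key : ∀ p ∈ T \ ({d1, d2} : Set (Set Cell)), ∀ q, q ⊆ d1 ∪ d2 → Disjoint p q := by
      rintro p ⟨hpT, hpn⟩ q hq
      rw [Set.disjoint_left]
      intro c hcp hcq
      rcases hq hcq with hc1 | hc2
      · exact Set.disjoint_left.mp
          (hpd hpT h1 (fun h => hpn (by rw [h]; exact Set.mem_insert _ _))) hcp hc1
      · exact Set.disjoint_left.mp
          (hpd hpT h2 (fun h => hpn (by rw [h]; right; rfl))) hcp hc2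
    intro p hp q hq hpq
    simp only [Function.onFun, id]
    rcases hp with hp | hp <;> rcases hq with hq | hq
    · exact hpd hp.1 hq.1 hpq
    · rcases hq with rfl | rfl
      · exact key p hp q (by rw [← hcover]; exact Set.subset_union_left)
      · exact key p hp q (by rw [← hcover]; exact Set.subset_union_right)
    · rcases hp with rfl | rfl
      · exact (key q hq p (by rw [← hcover]; exact Set.subset_union_left)).symm
      · exact (key q hq p (by rw [← hcover]; exact Set.subset_union_right)).symm
    · rcases hp with rfl | rfl <;> rcases hq with rfl | rfl
      · exact absurd rfl hpq
      · exact hee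
      · exact hee.symm
      · exact absurd rfl hpq
  · -- union
    rw [Set.sUnion_union, Set.sUnion_pair, hcover, ← Set.sUnion_pair d1 d2,
      ← Set.sUnion_union, Set.diff_union_of_subset hsubpair, hun]

/-- Characterization of axis membership off `v` after a flip at `v`. -/
lemma axis_offv_iff {T : Set (Set Cell)} {d1 d2 e1 e2 : Set Cell} {v : Vertex}
    (a1 : AxThruV v d1) (a2 : AxThruV v d2) (b1 : AxThruV v e1) (b2 : AxThruV v e2)
    {p q : Vertex} (hp : p ≠ v) (hq : q ≠ v) :
    (∃ d ∈ (T \ {d1, d2}) ∪ {e1, e2}, IsCentralAxis d p q) ↔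
      (∃ d ∈ T, IsCentralAxis d p q) := by
  constructor
  · rintro ⟨d, hd | hd, hax⟩
    · exact ⟨d, hd.1, hax⟩
    · exfalso
      rcases hd with rfl | rfl
      · rcases b1 p q hax with rfl | rfl
        · exact hp rfl
        · exact hq rfl
      · rcases b2 p q hax with rfl | rfl
        · exact hp rfl
        · exact hq rfl
  · rintro ⟨d, hd, hax⟩
    refine ⟨d, Or.inl ⟨hd, ?_⟩, hax⟩
    rintro (rfl | rfl)
    · rcases a1 p q hax with rfl | rfl
      · exact hp rfl
      · exact hq rfl
    · rcases a2 p q hax with rfl | rfl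
      · exact hp rfl
      · exact hq rfl

/-- The four dominoes around `v` have axes through `v`. -/
lemma axThruV_up (x y : ℤ) : AxThruV (x, y) {((x - 1, y) : Cell), (x, y)} := by
  intro p q hax
  have hpq := axis_pair_of_horiz hax
    (show _ = {((x - 1, y) : Cell), (x - 1 + 1, y)} from by
      rw [show (x - 1 + 1 : ℤ) = x from by ring])
  have hv : ((x, y) : Vertex) ∈ ({p, q} : Set Vertex) := by
    rw [hpq, show (x - 1 + 1 : ℤ) = x from by ring]
    exact Set.mem_insert _ _
  rcases hv with h | h
  · exact Or.inl h
  · exact Or.inr h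

lemma axThruV_dn (x y : ℤ) : AxThruV (x, y) {((x - 1, y - 1) : Cell), (x, y - 1)} := by
  intro p q hax
  have hpq := axis_pair_of_horiz hax
    (show _ = {((x - 1, y - 1) : Cell), (x - 1 + 1, y - 1)} from by
      rw [show (x - 1 + 1 : ℤ) = x from by ring])
  have hv : ((x, y) : Vertex) ∈ ({p, q} : Set Vertex) := by
    rw [hpq, show (x - 1 + 1 : ℤ) = x from by ring, show (y - 1 + 1 : ℤ) = y from by ring]
    right; rfl
  rcases hv with h | h
  · exact Or.inl h
  · exact Or.inr h

lemma axThruV_rt (x y : ℤ) : AxThruV (x, y) {((x, y - 1) : Cell), (x, y)} := by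
  intro p q hax
  have hpq := axis_pair_of_vert hax
    (show _ = {((x, y - 1) : Cell), (x, y - 1 + 1)} from by
      rw [show (y - 1 + 1 : ℤ) = y from by ring])
  have hv : ((x, y) : Vertex) ∈ ({p, q} : Set Vertex) := by
    rw [hpq, show (y - 1 + 1 : ℤ) = y from by ring]
    exact Set.mem_insert _ _
  rcases hv with h | h
  · exact Or.inl h
  · exact Or.inr h

lemma axThruV_lt (x y : ℤ) : AxThruV (x, y) {((x - 1, y - 1) : Cell), (x - 1, y)} := by
  intro p q hax
  have hpq := axis_pair_of_vert hax
    (show _ = {((x - 1, y - 1) : Cell), (x - 1, y - 1 + 1)} from by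
      rw [show (y - 1 + 1 : ℤ) = y from by ring])
  have hv : ((x, y) : Vertex) ∈ ({p, q} : Set Vertex) := by
    rw [hpq, show (y - 1 + 1 : ℤ) = y from by ring, show (x - 1 + 1 : ℤ) = x from by ring]
    right; rfl
  rcases hv with h | h
  · exact Or.inl h
  · exact Or.inr h

lemma isDirEdge_ne {p q : Vertex} (h : IsDirEdge p q) : p ≠ q := by
  obtain ⟨a, b⟩ := p; obtain ⟨c, d⟩ := q
  intro heq
  rw [Prod.mk.injEq] at heq
  obtain ⟨rfl, rfl⟩ := heq
  simp only [IsDirEdge, Prod.ext_iff, Int.even_iff] at h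
  omega
/-! ### Downward flip at a local maximum -/

lemma flip_at_local_max {D : Set Cell} (hD : IsDomain D) {O : Vertex}
    (hO : IsBoundaryVertexOf D O) {T : Set (Set Cell)} {h : Vertex → ℤ}
    (hT : IsTiling D T) (H : IsHeightFunction D O T h) {v : Vertex}
    (hmax : IsLocalMax D h v) :
    ∃ T', IsTiling D T' ∧
      IsHeightFunction D O T' (Function.update h v (h v - 4)) := by
  obtain ⟨hIV, hnbr⟩ := hmax
  obtain ⟨x, y⟩ := v
  obtain ⟨hc00, hc10, hc01, hc11⟩ := interior_vertex_cells hD hIV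
  dsimp only at hc00 hc10 hc01 hc11
  have sv := H.stepValid
  have hup : h (x, y + 1) < h (x, y) := hnbr _ (Or.inr (Or.inr (Or.inl rfl)))
  have hdn : h (x, y - 1) < h (x, y) := hnbr _ (Or.inr (Or.inr (Or.inr rfl)))
  have hrt : h (x + 1, y) < h (x, y) := hnbr _ (Or.inl rfl)
  have hlt : h (x - 1, y) < h (x, y) := hnbr _ (Or.inr (Or.inl rfl))
  have hOne : O ≠ ((x, y) : Vertex) := by
    intro heq
    exact hIV.2 (heq ▸ hO.2)
  -- corner membership helper facts
  have m11a : ((x, y) : Vertex) ∈ cornersOf (x, y) := by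
    (try simp [cornersOf, Prod.ext_iff]) <;> omega
  have m11b : ((x, y + 1) : Vertex) ∈ cornersOf (x, y) := by
    (try simp [cornersOf, Prod.ext_iff]) <;> omega
  have m11c : ((x + 1, y) : Vertex) ∈ cornersOf (x, y) := by
    (try simp [cornersOf, Prod.ext_iff]) <;> omega
  have m10a : ((x, y) : Vertex) ∈ cornersOf (x, y - 1) := by
    (try simp [cornersOf, Prod.ext_iff]) <;> omega
  have m10b : ((x, y - 1) : Vertex) ∈ cornersOf (x, y - 1) := by
    (try simp [cornersOf, Prod.ext_iff]) <;> omega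
  have m01a : ((x, y) : Vertex) ∈ cornersOf (x - 1, y) := by
    (try simp [cornersOf, Prod.ext_iff]) <;> omega
  have m01b : ((x - 1, y) : Vertex) ∈ cornersOf (x - 1, y) := by
    (try simp [cornersOf, Prod.ext_iff]) <;> omega
  -- the four dominoes around v
  set dUP : Set Cell := {(x - 1, y), (x, y)} with hdUP
  set dDN : Set Cell := {(x - 1, y - 1), (x, y - 1)} with hdDN
  set dLT : Set Cell := {(x - 1, y - 1), (x - 1, y)} with hdLT
  set dRT : Set Cell := {(x, y - 1), (x, y)} with hdRT
  have covEq : dLT ∪ dRT = dDN ∪ dUP := by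
    rw [hdUP, hdDN, hdLT, hdRT]
    ext ⟨c1, c2⟩
    simp only [Set.mem_union, Set.mem_insert_iff, Set.mem_singleton_iff, Prod.mk.injEq]
    omega
  have hUPDN : dUP ≠ dDN := by
    rw [hdUP, hdDN, Ne, Set.pair_eq_pair_iff]
    simp only [Prod.mk.injEq]; omega
  have hLTRT : dLT ≠ dRT := by
    rw [hdLT, hdRT, Ne, Set.pair_eq_pair_iff]
    simp only [Prod.mk.injEq]; omega
  have hLTdisj : Disjoint dLT dRT := by
    rw [hdLT, hdRT, Set.disjoint_left]
    rintro ⟨c1, c2⟩ hc1 hc2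
    simp only [Set.mem_insert_iff, Set.mem_singleton_iff, Prod.mk.injEq] at hc1 hc2
    omega
  have hUPdisj : Disjoint dDN dUP := by
    rw [hdUP, hdDN, Set.disjoint_left]
    rintro ⟨c1, c2⟩ hc1 hc2
    simp only [Set.mem_insert_iff, Set.mem_singleton_iff, Prod.mk.injEq] at hc1 hc2
    omega
  have hneq4 : dUP ≠ dLT ∧ dUP ≠ dRT ∧ dDN ≠ dLT ∧ dDN ≠ dRT := by
    rw [hdUP, hdDN, hdLT, hdRT]
    refine ⟨?_, ?_, ?_, ?_⟩ <;>
      · rw [Ne, Set.pair_eq_pair_iff]; simp only [Prod.mk.injEq]; omega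
  have hisoUP : IsDomino dUP := ⟨x - 1, y, Or.inl (by
    rw [hdUP, show (x - 1 + 1 : ℤ) = x from by ring])⟩
  have hisoDN : IsDomino dDN := ⟨x - 1, y - 1, Or.inl (by
    rw [hdDN, show (x - 1 + 1 : ℤ) = x from by ring])⟩
  have hisoLT : IsDomino dLT := ⟨x - 1, y - 1, Or.inr (by
    rw [hdLT, show (y - 1 + 1 : ℤ) = y from by ring])⟩
  have hisoRT : IsDomino dRT := ⟨x, y - 1, Or.inr (by
    rw [hdRT, show (y - 1 + 1 : ℤ) = y from by ring])⟩
  -- axes of the four dominoes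
  have axUP : IsCentralAxis dUP (x, y) (x, y + 1) := by
    rw [hdUP]; exact axis_vert_mk x y
  have axDN : IsCentralAxis dDN (x, y - 1) (x, y) := by
    have := axis_vert_mk x (y - 1)
    rw [show (y - 1 + 1 : ℤ) = y from by ring] at this
    rw [hdDN]; exact this
  have axRT : IsCentralAxis dRT (x, y) (x + 1, y) := by
    rw [hdRT]; exact axis_horiz_mk x y
  have axLT : IsCentralAxis dLT (x - 1, y) (x, y) := by
    have := axis_horiz_mk (x - 1) y
    rw [show (x - 1 + 1 : ℤ) = x from by ring] at this
    rw [hdLT]; exact this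
  -- axes through v
  have tUP : AxThruV (x, y) dUP := by rw [hdUP]; exact axThruV_up x y
  have tDN : AxThruV (x, y) dDN := by rw [hdDN]; exact axThruV_dn x y
  have tLT : AxThruV (x, y) dLT := by rw [hdLT]; exact axThruV_lt x y
  have tRT : AxThruV (x, y) dRT := by rw [hdRT]; exact axThruV_rt x y
  by_cases hpar : Even (x + y)
  · -- outgoing edges are vertical; hDominoes (dDN, dUP) are in T, replaced by dLT, dRT
    have eup : EdgeInDomain D (x, y) (x, y + 1) :=
      ⟨Or.inl ⟨hpar, Or.inl rfl⟩, (x, y), hc11, m11a, m11b⟩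
    have edn : EdgeInDomain D (x, y) (x, y - 1) :=
      ⟨Or.inl ⟨hpar, Or.inr rfl⟩, (x, y - 1), hc10, m10a, m10b⟩
    have elt : EdgeInDomain D (x - 1, y) (x, y) :=
      ⟨Or.inr ⟨by simp only [Int.even_iff] at hpar ⊢; omega,
        Or.inl (by rw [Prod.mk.injEq]; omega)⟩, (x - 1, y), hc01, m01b, m01a⟩
    have ert : EdgeInDomain D (x + 1, y) (x, y) :=
      ⟨Or.inr ⟨by simp only [Int.even_iff] at hpar ⊢; omega,
        Or.inr (by rw [Prod.mk.injEq]; omega)⟩, (x, y), hc11, m11c, m11a⟩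
    have sup : h (x, y + 1) = h (x, y) - 3 := by
      rcases sv _ _ eup with e | e
      · exact e
      · omega
    have sdn : h (x, y - 1) = h (x, y) - 3 := by
      rcases sv _ _ edn with e | e
      · exact e
      · omega
    have slt : h (x, y) = h (x - 1, y) + 1 := by
      rcases sv _ _ elt with e | e
      · omega
      · exact e
    have srt : h (x, y) = h (x + 1, y) + 1 := by
      rcases sv _ _ ert with e | e
      · omega
      · exact e
    -- the two dominoes with vertical axes at v are in T
    have hUPT : dUP ∈ T := by
      have hax : ∃ d ∈ T, IsCentralAxis d (x, y) (x, y + 1) := by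
        by_contra hn
        have := (H.2 _ _ eup).2 hn
        omega
      obtain ⟨d, hdT, hax⟩ := hax
      have : d = dUP := by rw [hdUP]; exact axis_pair_vert hax rfl
      rwa [← this]
    have hDNT : dDN ∈ T := by
      have hax : ∃ d ∈ T, IsCentralAxis d (x, y) (x, y - 1) := by
        by_contra hn
        have := (H.2 _ _ edn).2 hn
        omega
      obtain ⟨d, hdT, hax⟩ := hax
      have : d = dDN := by
        rw [hdDN]
        exact axis_pair_vert hax (by
          rw [show (y - 1 + 1 : ℤ) = y from by ring, Set.pair_comm])
      rwa [← this]
    refine ⟨(T \ {dDN, dUP}) ∪ {dLT, dRT},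
      retile hT hDNT hUPT (Ne.symm hUPDN) hisoLT hisoRT hLTdisj (by rw [covEq]), ?_, ?_⟩
    · rw [Function.update_of_ne hOne]; exact H.1
    · intro p q e
      by_cases hpv : p = ((x, y) : Vertex)
      · subst hpv
        have hq : q = ((x, y + 1) : Vertex) ∨ q = ((x, y - 1) : Vertex) := by
          rcases e.1 with ⟨-, hq⟩ | ⟨hodd, -⟩
          · exact hq
          · exact absurd hpar hodd
        have hqv : q ≠ ((x, y) : Vertex) := by
          rcases hq with rfl | rfl <;> · rw [Ne, Prod.mk.injEq]; omega
        constructor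
        · rintro ⟨d, hdT', hax⟩
          exfalso
          have hd : d = dUP ∨ d = dDN := by
            rcases hq with rfl | rfl
            · left; rw [hdUP]; exact axis_pair_vert hax rfl
            · right; rw [hdDN]
              exact axis_pair_vert hax (by
                rw [show (y - 1 + 1 : ℤ) = y from by ring, Set.pair_comm])
          rcases hdT' with ⟨-, hdn2⟩ | hd2
          · apply hdn2
            rcases hd with rfl | rfl
            · right; rfl
            · left; rfl
          · have : d ≠ dLT ∧ d ≠ dRT := by
              rcases hd with rfl | rfl
              · exact ⟨hneq4.1, hneq4.2.1⟩
              · exact ⟨hneq4.2.2.1, hneq4.2.2.2⟩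
            rcases hd2 with rfl | rfl
            · exact this.1 rfl
            · exact this.2 rfl
        · intro _
          rw [Function.update_of_ne hqv, Function.update_self]
          rcases hq with rfl | rfl
          · omega
          · omega
      · by_cases hqv : q = ((x, y) : Vertex)
        · subst hqv
          have hp : p = ((x + 1, y) : Vertex) ∨ p = ((x - 1, y) : Vertex) := by
            rcases e.1 with ⟨hev, hq⟩ | ⟨-, hq⟩
            · exfalso
              obtain ⟨p1, p2⟩ := p
              simp only [Prod.mk.injEq] at hq
              simp only [Int.even_iff] at hev hpar
              omega
            · obtain ⟨p1, p2⟩ := p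
              simp only [Prod.mk.injEq] at hq ⊢
              omega
          have hax : ∃ d ∈ (T \ {dDN, dUP}) ∪ {dLT, dRT}, IsCentralAxis d p (x, y) := by
            rcases hp with rfl | rfl
            · exact ⟨dRT, Or.inr (Or.inr rfl), axis_comm axRT⟩
            · exact ⟨dLT, Or.inr (Or.inl rfl), axLT⟩
          constructor
          · intro _
            rw [Function.update_self, Function.update_of_ne hpv]
            rcases hp with rfl | rfl
            · omega
            · omega
          · intro hn
            exact absurd hax hn
        · have hiff := axis_offv_iff (T := T) tDN tUP tLT tRT hpv hqv
          constructor
          · intro hax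
            rw [Function.update_of_ne hqv, Function.update_of_ne hpv]
            exact (H.2 p q e).1 (hiff.mp hax)
          · intro hax
            rw [Function.update_of_ne hqv, Function.update_of_ne hpv]
            exact (H.2 p q e).2 (fun hx => hax (hiff.mpr hx))
  · -- odd case: outgoing edges horizontal; vDominoes (dLT, dRT) in T, replaced by dDN, dUP
    have ert : EdgeInDomain D (x, y) (x + 1, y) :=
      ⟨Or.inr ⟨hpar, Or.inl rfl⟩, (x, y), hc11, m11a, m11c⟩
    have elt : EdgeInDomain D (x, y) (x - 1, y) :=
      ⟨Or.inr ⟨hpar, Or.inr rfl⟩, (x - 1, y), hc01, m01a, m01b⟩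
    have eup : EdgeInDomain D (x, y + 1) (x, y) :=
      ⟨Or.inl ⟨by simp only [Int.even_iff] at hpar ⊢; omega,
        Or.inr (by rw [Prod.mk.injEq]; omega)⟩, (x, y), hc11, m11b, m11a⟩
    have edn : EdgeInDomain D (x, y - 1) (x, y) :=
      ⟨Or.inl ⟨by simp only [Int.even_iff] at hpar ⊢; omega,
        Or.inl (by rw [Prod.mk.injEq]; omega)⟩, (x, y - 1), hc10, m10b, m10a⟩
    have srt : h (x + 1, y) = h (x, y) - 3 := by
      rcases sv _ _ ert with e | e
      · exact e
      · omega
    have slt : h (x - 1, y) = h (x, y) - 3 := by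
      rcases sv _ _ elt with e | e
      · exact e
      · omega
    have sup : h (x, y) = h (x, y + 1) + 1 := by
      rcases sv _ _ eup with e | e
      · omega
      · exact e
    have sdn : h (x, y) = h (x, y - 1) + 1 := by
      rcases sv _ _ edn with e | e
      · omega
      · exact e
    have hRTT : dRT ∈ T := by
      have hax : ∃ d ∈ T, IsCentralAxis d (x, y) (x + 1, y) := by
        by_contra hn
        have := (H.2 _ _ ert).2 hn
        omega
      obtain ⟨d, hdT, hax⟩ := hax
      have : d = dRT := by rw [hdRT]; exact axis_pair_horiz hax rfl
      rwa [← this]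
    have hLTT : dLT ∈ T := by
      have hax : ∃ d ∈ T, IsCentralAxis d (x, y) (x - 1, y) := by
        by_contra hn
        have := (H.2 _ _ elt).2 hn
        omega
      obtain ⟨d, hdT, hax⟩ := hax
      have : d = dLT := by
        rw [hdLT]
        exact axis_pair_horiz hax (by
          rw [show (x - 1 + 1 : ℤ) = x from by ring, Set.pair_comm])
      rwa [← this]
    refine ⟨(T \ {dLT, dRT}) ∪ {dDN, dUP},
      retile hT hLTT hRTT hLTRT hisoDN hisoUP hUPdisj (by rw [covEq]), ?_, ?_⟩
    · rw [Function.update_of_ne hOne]; exact H.1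
    · intro p q e
      by_cases hpv : p = ((x, y) : Vertex)
      · subst hpv
        have hq : q = ((x + 1, y) : Vertex) ∨ q = ((x - 1, y) : Vertex) := by
          rcases e.1 with ⟨hev, -⟩ | ⟨-, hq⟩
          · exact absurd hev hpar
          · exact hq
        have hqv : q ≠ ((x, y) : Vertex) := by
          rcases hq with rfl | rfl <;> · rw [Ne, Prod.mk.injEq]; omega
        constructor
        · rintro ⟨d, hdT', hax⟩
          exfalso
          have hd : d = dRT ∨ d = dLT := by
            rcases hq with rfl | rfl
            · left; rw [hdRT]; exact axis_pair_horiz hax rfl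
            · right; rw [hdLT]
              exact axis_pair_horiz hax (by
                rw [show (x - 1 + 1 : ℤ) = x from by ring, Set.pair_comm])
          rcases hdT' with ⟨-, hdn2⟩ | hd2
          · apply hdn2
            rcases hd with rfl | rfl
            · right; rfl
            · left; rfl
          · have : d ≠ dDN ∧ d ≠ dUP := by
              rcases hd with rfl | rfl
              · exact ⟨(hneq4.2.2.2).symm, (hneq4.2.1).symm⟩
              · exact ⟨(hneq4.2.2.1).symm, (hneq4.1).symm⟩
            rcases hd2 with rfl | rfl
            · exact this.1 rfl
            · exact this.2 rfl
        · intro _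
          rw [Function.update_of_ne hqv, Function.update_self]
          rcases hq with rfl | rfl
          · omega
          · omega
      · by_cases hqv : q = ((x, y) : Vertex)
        · subst hqv
          have hp : p = ((x, y + 1) : Vertex) ∨ p = ((x, y - 1) : Vertex) := by
            rcases e.1 with ⟨-, hq⟩ | ⟨hodd, hq⟩
            · obtain ⟨p1, p2⟩ := p
              simp only [Prod.mk.injEq] at hq ⊢
              omega
            · exfalso
              obtain ⟨p1, p2⟩ := p
              simp only [Prod.mk.injEq] at hq
              simp only [Int.even_iff] at hodd hpar
              omega
          have hax : ∃ d ∈ (T \ {dLT, dRT}) ∪ {dDN, dUP}, IsCentralAxis d p (x, y) := by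
            rcases hp with rfl | rfl
            · exact ⟨dUP, Or.inr (Or.inr rfl), axis_comm axUP⟩
            · exact ⟨dDN, Or.inr (Or.inl rfl), axDN⟩
          constructor
          · intro _
            rw [Function.update_self, Function.update_of_ne hpv]
            rcases hp with rfl | rfl
            · omega
            · omega
          · intro hn
            exact absurd hax hn
        · have hiff := axis_offv_iff (T := T) tLT tRT tDN tUP hpv hqv
          constructor
          · intro hax
            rw [Function.update_of_ne hqv, Function.update_of_ne hpv]
            exact (H.2 p q e).1 (hiff.mp hax)
          · intro hax
            rw [Function.update_of_ne hqv, Function.update_of_ne hpv]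
            exact (H.2 p q e).2 (fun hx => hax (hiff.mpr hx))
/-! ### Finiteness and the main theorem -/

lemma tilings_finite {D : Set Cell} (hfin : D.Finite) :
    {T : Set (Set Cell) | IsTiling D T}.Finite := by
  apply Set.Finite.subset hfin.finite_subsets.finite_subsets
  intro T hT d hd
  show d ⊆ D
  rw [← hT.2.2]
  exact fun c hc => ⟨d, hd, hc⟩

/-- constrained minimal tilings: if some tiling realizes the
prescribed heights `g` on a set `S` of interior vertices, then there is a
smallest such tiling, and its height function has no local maximum at any
interior vertex outside `S`. -/
theorem constrained_minimal_tiling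
    (D : Set Cell) (hD : IsDomain D)
    (O : Vertex) (hO : IsBoundaryVertexOf D O)
    (S : Set Vertex) (hS : ∀ v ∈ S, IsInteriorVertexOf D v)
    (g : Vertex → ℤ)
    (hex : ∃ (T : Set (Set Cell)) (h : Vertex → ℤ),
      IsTiling D T ∧ IsHeightFunction D O T h ∧ ∀ v ∈ S, h v = g v) :
    ∃ (TS : Set (Set Cell)) (hs : Vertex → ℤ),
      IsTiling D TS ∧ IsHeightFunction D O TS hs ∧ (∀ v ∈ S, hs v = g v) ∧
      (∀ T : Set (Set Cell), IsTiling D T →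
        (∃ h : Vertex → ℤ, IsHeightFunction D O T h ∧ ∀ v ∈ S, h v = g v) →
        TilingLE D O TS T) ∧
      (∀ v : Vertex, v ∉ S → ¬ IsLocalMax D hs v) := by
  classical
  have hOv : IsVertexOf D O := hO.1
  set 𝒯 : Set (Set (Set Cell)) :=
    {T | IsTiling D T ∧ ∃ h', IsHeightFunction D O T h' ∧ ∀ v ∈ S, h' v = g v} with h𝒯
  obtain ⟨T0, h0, hT0, hH0, hg0⟩ := hex
  have hne : 𝒯.Nonempty := ⟨T0, hT0, h0, hH0, hg0⟩
  have hfin : 𝒯.Finite := (tilings_finite hD.finite).subset (fun T hT => hT.1)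
  have key : ∀ F : Set (Set (Set Cell)), F.Finite → F ⊆ 𝒯 → F.Nonempty →
      ∃ hs : Vertex → ℤ,
        (∃ TS, IsTiling D TS ∧ IsHeightFunction D O TS hs ∧ ∀ v ∈ S, hs v = g v) ∧
        ∀ T ∈ F, ∀ h' : Vertex → ℤ, IsHeightFunction D O T h' →
          ∀ v, IsVertexOf D v → hs v ≤ h' v := by
    intro F hF
    refine Set.Finite.induction_on F hF ?_ ?_
    · intro _ hne2
      exact absurd hne2 (by simp)
    · intro a F' haF' hF' IH hsub hne2
      have haT : a ∈ 𝒯 := hsub (Set.mem_insert _ _)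
      obtain ⟨hTa, ha, hHa, hga⟩ := haT
      by_cases hFne : F'.Nonempty
      · obtain ⟨hs, ⟨TS, hTS, hHS, hgS⟩, hmin⟩ :=
          IH (fun T hT => hsub (Set.mem_insert_of_mem _ hT)) hFne
        set hm : Vertex → ℤ := fun v => min (ha v) (hs v) with hhm
        have sva := hHa.stepValid
        have svs := hHS.stepValid
        have dia := heightFunction_dropsInterior hTa hHa
        have dis := heightFunction_dropsInterior hTS hHS
        have svm := min_stepValid hD hOv sva svs hHa.1 hHS.1
        have dim := min_dropsInterior hD hOv sva svs hHa.1 hHS.1 dia dis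
        have hm0 : hm O = 0 := by
          rw [hhm]; simp only; rw [hHa.1, hHS.1]; rfl
        refine ⟨hm, ⟨TilingOf D hm, tilingOf_isTiling svm dim,
          tilingOf_heightFunction hm0 svm dim, fun v hv => by
            rw [hhm]; simp only; rw [hga v hv, hgS v hv, min_self]⟩, ?_⟩
        rintro T (rfl | hTF) h' hH' v hv
        · have := heightFunction_unique hHa hH' (reach_of_vertices hD hOv hv)
          calc hm v ≤ ha v := min_le_left _ _
            _ = h' v := this
        · exact le_trans (min_le_right _ _) (hmin T hTF h' hH' v hv)
      · refine ⟨ha, ⟨a, hTa, hHa, hga⟩, ?_⟩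
        rintro T (rfl | hTF) h' hH' v hv
        · exact le_of_eq (heightFunction_unique hHa hH' (reach_of_vertices hD hOv hv))
        · rw [Set.not_nonempty_iff_eq_empty.mp hFne] at hTF
          exact absurd hTF (Set.notMem_empty _)
  obtain ⟨hs, ⟨TS, hTS, hHS, hgS⟩, hmin⟩ := key 𝒯 hfin (subset_refl _) hne
  refine ⟨TS, hs, hTS, hHS, hgS, ?_, ?_⟩
  · intro T hT hex2 h1 h2 H1 H2 v hv
    obtain ⟨h', hH', hg'⟩ := hex2
    have hT𝒯 : T ∈ 𝒯 := ⟨hT, h', hH', hg'⟩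
    have e1 : h1 v = hs v := heightFunction_unique H1 hHS (reach_of_vertices hD hOv hv)
    rw [e1]
    exact hmin T hT𝒯 h2 H2 v hv
  · intro v hvS hmax
    have hvV : IsVertexOf D v := hmax.1.1
    obtain ⟨T', hT', hH'⟩ := flip_at_local_max hD hO hTS hHS hmax
    have hT'𝒯 : T' ∈ 𝒯 := by
      refine ⟨hT', Function.update hs v (hs v - 4), hH', fun w hw => ?_⟩
      rw [Function.update_of_ne (fun hwv : w = v => hvS (hwv ▸ hw))]
      exact hgS w hw
    have hle := hmin T' hT'𝒯 _ hH' v hvV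
    rw [Function.update_self] at hle
    omega
end DominoTiling
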